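/- Let k ≥ 1 be an integer and let d_k(n) denote the number of ways of writing n as an ordered product of k positive integers. Suppose -1 ≤ σ ≤ 0 and x ≥ 1. Then ∑_{n ≤ x} (d_k(n)/n) (x/n)^σ ≪_k (log 3x)^{k-1} · min(|σ|^{-1}, log 3x), with the convention that min(|σ|^{-1}, log 3x) = log 3x when σ = 0. -/

import Mathlib

/-- The `k`-fold divisor function: number of ways of writing `n` as an ordered
product of `k` positive integers. -/
def dk : ℕ → ℕ → ℕ
  | 0, n => if n = 1 then 1 else 0
  | (k + 1), n => ∑ d ∈ n.divisors, dk k (n / d)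

open Finset Real

lemma Tset_eq (N : ℕ) :
    (Finset.Icc 1 N).biUnion (fun n => n.divisorsAntidiagonal)
      = (Finset.Icc 1 N ×ˢ Finset.Icc 1 N).filter (fun p => p.1 * p.2 ≤ N) := by
  ext p
  simp only [Finset.mem_biUnion, Finset.mem_Icc, Nat.mem_divisorsAntidiagonal,
    Finset.mem_filter, Finset.mem_product]
  constructor
  · rintro ⟨n, ⟨hn1, hnN⟩, hp, hn0⟩
    have h1 : 1 ≤ p.1 := Nat.one_le_iff_ne_zero.mpr (by intro h; rw [h, zero_mul] at hp; omega)
    have h2 : 1 ≤ p.2 := Nat.one_le_iff_ne_zero.mpr (by intro h; rw [h, mul_zero] at hp; omega)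
    refine ⟨⟨⟨h1, ?_⟩, h2, ?_⟩, by omega⟩ <;> nlinarith
  · rintro ⟨⟨⟨h1, h1N⟩, h2, h2N⟩, hle⟩
    exact ⟨p.1 * p.2, ⟨Nat.one_le_iff_ne_zero.mpr (by positivity), hle⟩, rfl, by positivity⟩

lemma filter_mul_le (N m : ℕ) (hm : 1 ≤ m) :
    (Finset.Icc 1 N).filter (fun l => l * m ≤ N) = Finset.Icc 1 (N / m) := by
  ext l
  simp only [Finset.mem_filter, Finset.mem_Icc, Nat.le_div_iff_mul_le hm]
  constructor
  · rintro ⟨⟨h1, _⟩, h⟩; exact ⟨h1, h⟩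
  · rintro ⟨h1, h⟩
    exact ⟨⟨h1, le_trans (Nat.le_mul_of_pos_right l hm) h⟩, h⟩

lemma dk_sum_eq (k N : ℕ) (f : ℕ → ℝ) :
    ∑ n ∈ Finset.Icc 1 N, (dk (k+1) n : ℝ) * f n
      = ∑ m ∈ Finset.Icc 1 N, ∑ l ∈ Finset.Icc 1 (N / m), (dk k m : ℝ) * f (l * m) := by
  have step1 : ∀ n ∈ Finset.Icc 1 N, (dk (k+1) n : ℝ) * f n
      = ∑ p ∈ n.divisorsAntidiagonal, (dk k p.2 : ℝ) * f (p.1 * p.2) := by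
    intro n hn
    have : (dk (k+1) n : ℝ) = ∑ p ∈ n.divisorsAntidiagonal, (dk k p.2 : ℝ) := by
      show ((∑ d ∈ n.divisors, dk k (n / d) : ℕ) : ℝ) = _
      push_cast
      rw [← Nat.sum_divisorsAntidiagonal (fun a b => (dk k b : ℝ))]
    rw [this, Finset.sum_mul]
    refine Finset.sum_congr rfl fun p hp => ?_
    rw [(Nat.mem_divisorsAntidiagonal.mp hp).1]
  rw [Finset.sum_congr rfl step1]
  rw [← Finset.sum_biUnion (by
    intro a _ b _ hab
    refine Finset.disjoint_left.mpr fun p hpa hpb => hab ?_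
    rw [← (Nat.mem_divisorsAntidiagonal.mp hpa).1, (Nat.mem_divisorsAntidiagonal.mp hpb).1])]
  rw [Tset_eq, Finset.sum_filter, Finset.sum_product_right]
  refine Finset.sum_congr rfl fun m hm => ?_
  rw [← Finset.sum_filter, filter_mul_le N m (Finset.mem_Icc.mp hm).1]

lemma log_nat_mono {a b : ℕ} (h : a ≤ b) : Real.log a ≤ Real.log b := by
  rcases Nat.eq_zero_or_pos a with h0 | h0
  · simpa [h0] using Real.log_natCast_nonneg b
  · exact Real.log_le_log (by exact_mod_cast h0) (by exact_mod_cast h)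

lemma harmonic_Icc (M : ℕ) : ∑ l ∈ Finset.Icc 1 M, (1 : ℝ) / l ≤ 1 + Real.log M := by
  have := harmonic_le_one_add_log M
  rw [harmonic_eq_sum_Icc] at this
  push_cast at this
  simpa [one_div] using this

lemma sum_dk_div_le : ∀ (k N : ℕ), ∑ n ∈ Finset.Icc 1 N, (dk k n : ℝ) / n ≤ (1 + Real.log N) ^ k
  | 0, N => by
    have h1 : ∀ n ∈ Finset.Icc 1 N, (dk 0 n : ℝ) / n = if n = 1 then 1 else 0 := by
      intro n hn
      simp only [dk]
      split_ifs with h <;> simp [h]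
    rw [Finset.sum_congr rfl h1, Finset.sum_ite_eq' (Finset.Icc 1 N) 1 (fun _ => (1:ℝ))]
    split_ifs <;> simp
  | (k+1), N => by
    have key := dk_sum_eq k N (fun n => 1 / n)
    have hlogN : (0:ℝ) ≤ 1 + Real.log N := by positivity
    calc ∑ n ∈ Finset.Icc 1 N, (dk (k+1) n : ℝ) / n
        = ∑ n ∈ Finset.Icc 1 N, (dk (k+1) n : ℝ) * (1 / n) := by
          simp [div_eq_mul_inv, one_div]
      _ = ∑ m ∈ Finset.Icc 1 N, ∑ l ∈ Finset.Icc 1 (N / m), (dk k m : ℝ) * (1 / (l * m)) := by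
          rw [key]
          refine Finset.sum_congr rfl fun m _ => Finset.sum_congr rfl fun l _ => ?_
          push_cast; ring
      _ ≤ ∑ m ∈ Finset.Icc 1 N, ((dk k m : ℝ) / m) * (1 + Real.log N) := by
          refine Finset.sum_le_sum fun m hm => ?_
          have hterm : ∀ l : ℕ, (dk k m : ℝ) * (1 / (l * m)) = ((dk k m : ℝ) / m) * (1 / l) := by
            intro l
            rcases Nat.eq_zero_or_pos l with h0 | h0
            · simp [h0]
            · field_simp
          rw [Finset.sum_congr rfl (fun l _ => hterm l), ← Finset.mul_sum]
          refine mul_le_mul_of_nonneg_left ?_ (by positivity)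
          exact (harmonic_Icc _).trans (by
            have := log_nat_mono (Nat.div_le_self N m)
            linarith)
      _ = (∑ m ∈ Finset.Icc 1 N, (dk k m : ℝ) / m) * (1 + Real.log N) := by
          rw [Finset.sum_mul]
      _ ≤ (1 + Real.log N) ^ k * (1 + Real.log N) := by
          exact mul_le_mul_of_nonneg_right (sum_dk_div_le k N) hlogN
      _ = (1 + Real.log N) ^ (k + 1) := by ring

lemma pow_diff_key {s : ℝ} (hs0 : 0 < s) (hs1 : s ≤ 1) (M : ℕ) :
    ((M + 1 : ℕ) : ℝ) ^ (s - 1) ≤ (((M + 1 : ℕ) : ℝ) ^ s - (M : ℝ) ^ s) / s := by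
  rw [le_div_iff₀ hs0]
  have hM1 : (0:ℝ) < ((M + 1 : ℕ) : ℝ) := by positivity
  have hu : (M : ℝ) / ((M+1:ℕ) : ℝ) ≤ 1 := by
    rw [div_le_one hM1]; exact_mod_cast Nat.le_succ M
  have key := Real.geom_mean_le_arith_mean2_weighted hs0.le (by linarith : (0:ℝ) ≤ 1 - s)
    (by positivity : (0:ℝ) ≤ (M : ℝ) / ((M+1:ℕ) : ℝ)) zero_le_one (by ring)
  rw [Real.one_rpow, mul_one, mul_one] at key
  -- key : (M/(M+1))^s ≤ s * (M/(M+1)) + (1 - s)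
  have hMs : (M : ℝ) ^ s = ((M:ℝ) / ((M+1:ℕ):ℝ)) ^ s * ((M+1:ℕ):ℝ) ^ s := by
    rw [← Real.mul_rpow (by positivity) hM1.le, div_mul_cancel₀]
    exact hM1.ne'
  have h2 : ((M:ℝ) / ((M+1:ℕ):ℝ)) ^ s * ((M+1:ℕ):ℝ) ^ s
      ≤ (s * ((M:ℝ) / ((M+1:ℕ):ℝ)) + (1 - s)) * ((M+1:ℕ):ℝ) ^ s :=
    mul_le_mul_of_nonneg_right key (by positivity)
  have h3 : (s * ((M:ℝ) / ((M+1:ℕ):ℝ)) + (1 - s)) * ((M+1:ℕ):ℝ) ^ s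
      = ((M+1:ℕ):ℝ) ^ s - s * (((M+1:ℕ):ℝ) ^ s / ((M+1:ℕ):ℝ)) := by
    field_simp; push_cast; ring
  have h4 : ((M+1:ℕ):ℝ) ^ s / ((M+1:ℕ):ℝ) = ((M+1:ℕ):ℝ) ^ (s - 1) := by
    rw [Real.rpow_sub hM1, Real.rpow_one]
  nlinarith [hMs, h2, h3.symm ▸ h2, h4]

lemma sum_rpow_le {s : ℝ} (hs0 : 0 < s) (hs1 : s ≤ 1) (M : ℕ) :
    ∑ l ∈ Finset.Icc 1 M, (l : ℝ) ^ (s - 1) ≤ 1 + (M : ℝ) ^ s / s := by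
  induction M with
  | zero => simp; positivity
  | succ M ih =>
    rw [Finset.sum_Icc_succ_top (by omega)]
    have := pow_diff_key hs0 hs1 M
    have hnn : (0:ℝ) ≤ (M:ℝ) ^ s := by positivity
    push_cast at this ⊢
    rw [sub_div] at this
    linarith

lemma bound_trivial (k : ℕ) {σ x : ℝ} (hσ0 : σ ≤ 0) (hx : 1 ≤ x) :
    ∑ n ∈ Finset.Icc 1 ⌊x⌋₊, (dk k n : ℝ) / n * (x / n) ^ σ ≤ (1 + Real.log x) ^ k := by
  have h1 : ∑ n ∈ Finset.Icc 1 ⌊x⌋₊, (dk k n : ℝ) / n * (x / n) ^ σ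
      ≤ ∑ n ∈ Finset.Icc 1 ⌊x⌋₊, (dk k n : ℝ) / n := by
    refine Finset.sum_le_sum fun n hn => ?_
    obtain ⟨hn1, hnN⟩ := Finset.mem_Icc.mp hn
    have hnpos : (0:ℝ) < n := by exact_mod_cast hn1
    have hnx : (n:ℝ) ≤ x := le_trans (by exact_mod_cast hnN) (Nat.floor_le (by linarith))
    have : (x / n) ^ σ ≤ 1 :=
      Real.rpow_le_one_of_one_le_of_nonpos ((one_le_div hnpos).mpr hnx) hσ0
    calc (dk k n : ℝ) / n * (x / n) ^ σ ≤ (dk k n : ℝ) / n * 1 :=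
          mul_le_mul_of_nonneg_left this (by positivity)
      _ = (dk k n : ℝ) / n := mul_one _
  refine h1.trans ((sum_dk_div_le k ⌊x⌋₊).trans ?_)
  have hN1 : 1 ≤ ⌊x⌋₊ := Nat.le_floor (by exact_mod_cast hx)
  have : Real.log ⌊x⌋₊ ≤ Real.log x :=
    Real.log_le_log (by exact_mod_cast hN1) (Nat.floor_le (by linarith))
  have h0 : (0:ℝ) ≤ 1 + Real.log ⌊x⌋₊ := by positivity
  exact pow_le_pow_left₀ h0 (by linarith) k

lemma main_neg (k : ℕ) {σ x : ℝ} (hσ1 : -1 ≤ σ) (hσ0 : σ < 0) (hx : 1 ≤ x) :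
    ∑ n ∈ Finset.Icc 1 ⌊x⌋₊, (dk (k+1) n : ℝ) / n * (x / n) ^ σ
      ≤ 2 / (-σ) * (1 + Real.log x) ^ k := by
  set s : ℝ := -σ with hs
  have hs0 : 0 < s := by simp [hs]; linarith
  have hs1 : s ≤ 1 := by simp [hs]; linarith
  set N := ⌊x⌋₊ with hN
  have hNx : (N:ℝ) ≤ x := Nat.floor_le (by linarith)
  have key := dk_sum_eq k N (fun n => 1 / n * (x / n) ^ σ)
  have lhs_eq : ∑ n ∈ Finset.Icc 1 N, (dk (k+1) n : ℝ) / n * (x / n) ^ σ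
      = ∑ n ∈ Finset.Icc 1 N, (dk (k+1) n : ℝ) * (1 / n * (x / n) ^ σ) := by
    refine Finset.sum_congr rfl fun n _ => by ring
  rw [lhs_eq, key]
  have inner_bound : ∀ m ∈ Finset.Icc 1 N,
      ∑ l ∈ Finset.Icc 1 (N / m), (dk k m : ℝ) * (1 / ((l * m : ℕ):ℝ) * (x / ((l * m : ℕ):ℝ)) ^ σ)
        ≤ (dk k m : ℝ) / m * (2 / s) := by
    intro m hm
    obtain ⟨hm1, hmN⟩ := Finset.mem_Icc.mp hm
    have hmpos : (0:ℝ) < m := by exact_mod_cast hm1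
    have hmx : (m:ℝ) ≤ x := le_trans (by exact_mod_cast hmN) hNx
    set y : ℝ := x / m with hy
    have hy1 : 1 ≤ y := (one_le_div hmpos).mpr hmx
    have hy0 : 0 < y := lt_of_lt_of_le one_pos hy1
    have term_eq : ∀ l ∈ Finset.Icc 1 (N / m),
        (dk k m : ℝ) * (1 / ((l * m : ℕ):ℝ) * (x / ((l * m : ℕ):ℝ)) ^ σ)
          = (dk k m : ℝ) / m * (y ^ σ * (l:ℝ) ^ (s - 1)) := by
      intro l hl
      have hl1 : 1 ≤ l := (Finset.mem_Icc.mp hl).1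
      have hlpos : (0:ℝ) < l := by exact_mod_cast hl1
      have e1 : x / ((l:ℝ) * m) = y / l := by
        rw [hy, div_div, mul_comm (l:ℝ) m]
      have hσs : σ = -s := by rw [hs]; ring
      have e2 : (y / l) ^ σ = y ^ σ * (l:ℝ) ^ s := by
        rw [Real.div_rpow hy0.le hlpos.le, hσs, Real.rpow_neg hlpos.le,
          div_eq_mul_inv, inv_inv]
      have e3 : (l:ℝ) ^ s / l = (l:ℝ) ^ (s - 1) := by
        rw [Real.rpow_sub hlpos, Real.rpow_one]
      have hl0 : (l:ℝ) ≠ 0 := hlpos.ne'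
      have hm0 : (m:ℝ) ≠ 0 := hmpos.ne'
      push_cast
      rw [e1, e2, ← e3]
      field_simp
    rw [Finset.sum_congr rfl term_eq, ← Finset.mul_sum]
    refine mul_le_mul_of_nonneg_left ?_ (by positivity)
    have h4 : ∑ l ∈ Finset.Icc 1 (N / m), y ^ σ * (l:ℝ) ^ (s - 1)
        = y ^ σ * ∑ l ∈ Finset.Icc 1 (N / m), (l:ℝ) ^ (s - 1) := (Finset.mul_sum _ _ _).symm
    rw [h4]
    have hsum := sum_rpow_le hs0 hs1 (N / m)
    have hyσ : 0 ≤ y ^ σ := (Real.rpow_pos_of_pos hy0 σ).le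
    have h5 : y ^ σ * ∑ l ∈ Finset.Icc 1 (N / m), (l:ℝ) ^ (s - 1)
        ≤ y ^ σ * (1 + ((N / m : ℕ) : ℝ) ^ s / s) := mul_le_mul_of_nonneg_left hsum hyσ
    refine h5.trans ?_
    have hyσ1 : y ^ σ ≤ 1 := Real.rpow_le_one_of_one_le_of_nonpos hy1 hσ0.le
    have hNm : ((N / m : ℕ) : ℝ) ≤ y := by
      refine (Nat.cast_div_le).trans ?_
      rw [hy]
      gcongr
    have hNms : ((N / m : ℕ) : ℝ) ^ s ≤ y ^ s := Real.rpow_le_rpow (by positivity) hNm hs0.le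
    have hys : y ^ σ * y ^ s = 1 := by
      rw [← Real.rpow_add hy0, hs]; simp
    have h6 : y ^ σ * (((N / m : ℕ) : ℝ) ^ s / s) ≤ 1 / s := by
      rw [mul_div_assoc']
      gcongr
      calc y ^ σ * ((N / m : ℕ) : ℝ) ^ s ≤ y ^ σ * y ^ s :=
            mul_le_mul_of_nonneg_left hNms hyσ
        _ = 1 := hys
    have h7 : (1:ℝ) ≤ 1 / s := by
      rw [le_div_iff₀ hs0]; linarith
    calc y ^ σ * (1 + ((N / m : ℕ) : ℝ) ^ s / s)
        = y ^ σ + y ^ σ * (((N / m : ℕ) : ℝ) ^ s / s) := by ring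
      _ ≤ 1 + 1 / s := add_le_add hyσ1 h6
      _ ≤ 1 / s + 1 / s := by linarith
      _ = 2 / s := by ring
  calc ∑ m ∈ Finset.Icc 1 N, ∑ l ∈ Finset.Icc 1 (N / m), (dk k m : ℝ) * (1 / ((l * m : ℕ):ℝ) * (x / ((l * m : ℕ):ℝ)) ^ σ)
      ≤ ∑ m ∈ Finset.Icc 1 N, (dk k m : ℝ) / m * (2 / s) := Finset.sum_le_sum inner_bound
    _ = (∑ m ∈ Finset.Icc 1 N, (dk k m : ℝ) / m) * (2 / s) := (Finset.sum_mul _ _ _).symm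
    _ ≤ (1 + Real.log N) ^ k * (2 / s) := by
        refine mul_le_mul_of_nonneg_right (sum_dk_div_le k N) (by positivity)
    _ ≤ 2 / s * (1 + Real.log x) ^ k := by
        rw [mul_comm]
        refine mul_le_mul_of_nonneg_left ?_ (by positivity)
        refine pow_le_pow_left₀ (by positivity) ?_ k
        have : Real.log N ≤ Real.log x := by
          rcases Nat.eq_zero_or_pos N with h0 | h0
          · simp [h0]; exact Real.log_nonneg hx
          · exact Real.log_le_log (by exact_mod_cast h0) hNx
        linarith

theorem stmt1 (k : ℕ) (hk : 1 ≤ k) :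
    ∃ C : ℝ, 0 < C ∧ ∀ (σ x : ℝ), -1 ≤ σ → σ ≤ 0 → 1 ≤ x →
      ∑ n ∈ Finset.Icc 1 ⌊x⌋₊, ((dk k n : ℝ) / n) * (x / n) ^ σ
        ≤ C * (Real.log (3 * x)) ^ (k - 1) *
            (if σ = 0 then Real.log (3 * x) else min |σ|⁻¹ (Real.log (3 * x))) := by
  obtain ⟨j, rfl⟩ : ∃ j, k = j + 1 := ⟨k - 1, by omega⟩
  refine ⟨2, two_pos, fun σ x hσ1 hσ0 hx => ?_⟩
  set L := Real.log (3 * x) with hL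
  have hx0 : (0:ℝ) < x := lt_of_lt_of_le one_pos hx
  have hlog3 : (1:ℝ) ≤ Real.log 3 := by
    rw [Real.le_log_iff_exp_le (by norm_num)]
    exact Real.exp_one_lt_d9.le.trans (by norm_num)
  have hLx : 1 + Real.log x ≤ L := by
    rw [hL, Real.log_mul (by norm_num) hx0.ne']
    have := Real.log_nonneg hx
    linarith
  have hlogx : 0 ≤ Real.log x := Real.log_nonneg hx
  have hL0 : (0:ℝ) ≤ L := by linarith
  simp only [Nat.add_sub_cancel]
  have htriv : ∑ n ∈ Finset.Icc 1 ⌊x⌋₊, ((dk (j+1) n : ℝ) / n) * (x / n) ^ σ ≤ L ^ j * L := by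
    refine (bound_trivial (j+1) hσ0 hx).trans ?_
    calc (1 + Real.log x) ^ (j+1) ≤ L ^ (j+1) := pow_le_pow_left₀ (by positivity) hLx (j+1)
      _ = L ^ j * L := by ring
  by_cases h0 : σ = 0
  · rw [if_pos h0]
    calc ∑ n ∈ Finset.Icc 1 ⌊x⌋₊, ((dk (j+1) n : ℝ) / n) * (x / n) ^ σ
        ≤ L ^ j * L := htriv
      _ ≤ 2 * L ^ j * L := by nlinarith [pow_nonneg hL0 j]
  · rw [if_neg h0]
    have hσneg : σ < 0 := lt_of_le_of_ne hσ0 h0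
    have hs : (0:ℝ) < -σ := by linarith
    have habs : |σ| = -σ := abs_of_neg hσneg
    have hb1 : ∑ n ∈ Finset.Icc 1 ⌊x⌋₊, ((dk (j+1) n : ℝ) / n) * (x / n) ^ σ
        ≤ 2 * L ^ j * (-σ)⁻¹ := by
      refine (main_neg j hσ1 hσneg hx).trans ?_
      have hpow : (1 + Real.log x) ^ j ≤ L ^ j := pow_le_pow_left₀ (by positivity) hLx j
      calc 2 / (-σ) * (1 + Real.log x) ^ j ≤ 2 / (-σ) * L ^ j :=
            mul_le_mul_of_nonneg_left hpow (div_nonneg (by norm_num) hs.le)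
        _ = 2 * L ^ j * (-σ)⁻¹ := by rw [div_eq_mul_inv]; ring
    rcases min_cases |σ|⁻¹ L with ⟨hmin, _⟩ | ⟨hmin, _⟩
    · rw [hmin, habs]
      exact hb1
    · rw [hmin]
      calc ∑ n ∈ Finset.Icc 1 ⌊x⌋₊, ((dk (j+1) n : ℝ) / n) * (x / n) ^ σ
          ≤ L ^ j * L := htriv
        _ ≤ 2 * L ^ j * L := by nlinarith [pow_nonneg hL0 j]
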